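/- The empirical INTERPOL estimator, the average over n i.i.d. logged samples of Σ_{y∈Y₀,i} w_T(y|Y,Y₀,i)·c_i(y|Y₀,i), converges in probability (weak law of large numbers) to the target value Σ_{y∈Y} rel(y)·p_{rank(y|Y)} as n → ∞, under the position-based model with correctly specified position bias curve and positive window probabilities. -/

import Mathlib

open MeasureTheory Filter

section Aux

variable {K : ℕ} {A : Type*} [Fintype A] [DecidableEq A]

/-- Bernoulli marginalization: expectation of a single click indicator under the
product of independent Bernoulli click variables. -/
lemma interpol_bern_aux (p : Fin K → ℝ) (rel : A → ℝ)
    (Y₀ : A ≃ Fin K) (y₀ : A) :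
    ∑ c : A → Bool,
      (∏ y : A, (if c y then rel y * p (Y₀ y) else 1 - rel y * p (Y₀ y))) *
        (if c y₀ then (1 : ℝ) else 0)
      = rel y₀ * p (Y₀ y₀) := by
  classical
  have h1 : ∀ c : A → Bool,
      (∏ y : A, (if c y then rel y * p (Y₀ y) else 1 - rel y * p (Y₀ y))) *
        (if c y₀ then (1 : ℝ) else 0)
      = ∏ y : A, ((if c y then rel y * p (Y₀ y) else 1 - rel y * p (Y₀ y)) *
          (if y = y₀ then (if c y then (1 : ℝ) else 0) else 1)) := by
    intro c
    rw [Finset.prod_mul_distrib]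
    congr 1
    rw [Finset.prod_ite_eq' Finset.univ y₀
      (fun y => (if c y then (1 : ℝ) else 0))]
    simp
  simp only [h1]
  have h2 : ∑ c : A → Bool, ∏ y : A,
        ((if c y then rel y * p (Y₀ y) else 1 - rel y * p (Y₀ y)) *
          (if y = y₀ then (if c y then (1 : ℝ) else 0) else 1))
      = ∏ y : A, ∑ b : Bool,
        ((if b then rel y * p (Y₀ y) else 1 - rel y * p (Y₀ y)) *
          (if y = y₀ then (if b then (1 : ℝ) else 0) else 1)) := by
    rw [Finset.prod_univ_sum]
    rw [Fintype.piFinset_univ]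
  rw [h2]
  have h3 : ∀ y : A, (∑ b : Bool,
        ((if b then rel y * p (Y₀ y) else 1 - rel y * p (Y₀ y)) *
          (if y = y₀ then (if b then (1 : ℝ) else 0) else 1)))
      = if y = y₀ then rel y * p (Y₀ y) else 1 := by
    intro y
    rw [Fintype.sum_bool]
    by_cases hy : y = y₀ <;> simp [hy]
  simp only [h3]
  rw [Finset.prod_ite_eq' Finset.univ y₀ (fun y => rel y * p (Y₀ y))]
  simp

end Aux

/-- Weak law of large numbers for INTERPOL.  Logged samples
`X i = (Y₀ᵢ, cᵢ)` (ranking and click pattern) are i.i.d. with the joint law of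
the logging policy `π₀` and PBM clicks (item `y` clicked with probability
`rel y * p (rank(y|Y₀))`, independently across items).  The empirical INTERPOL
estimator (average over `n` samples of `∑_y w_T(y|Y,Y₀ᵢ) * cᵢ(y)`) converges in
probability to the target value `∑ y, rel y * p (rank(y|Y))`. -/
theorem interpol_weak_law_of_large_numbers
    (K : ℕ) (A : Type*) [Fintype A] [DecidableEq A]
    (p : Fin K → ℝ) (hp0 : ∀ k, 0 < p k) (hp1 : ∀ k, p k ≤ 1)
    (rel : A → ℝ) (hrel0 : ∀ y, 0 ≤ rel y) (hrel1 : ∀ y, rel y ≤ 1)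
    (π₀ : (A ≃ Fin K) → ℝ) (hπ₀ : ∀ Y₀, 0 ≤ π₀ Y₀)
    (hπ₀sum : ∑ Y₀ : A ≃ Fin K, π₀ Y₀ = 1)
    (Y : A ≃ Fin K) (T : ℕ)
    (Pwin : A → ℝ)
    (hPwin : ∀ y, Pwin y = ∑ Y₀ : A ≃ Fin K, π₀ Y₀ *
      (if |((Y₀ y : ℕ) : ℤ) - ((Y y : ℕ) : ℤ)| ≤ (T : ℤ) then (1 : ℝ) else 0))
    (hfull : ∀ y, 0 < Pwin y)
    (Ω : Type*) [MeasurableSpace Ω] (μ : Measure Ω) [IsProbabilityMeasure μ]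
    (X : ℕ → Ω → (A ≃ Fin K) × (A → Bool))
    (hmeas : ∀ i, @Measurable Ω ((A ≃ Fin K) × (A → Bool)) _
      (⊤ : MeasurableSpace ((A ≃ Fin K) × (A → Bool))) (X i))
    (hindep : ProbabilityTheory.iIndepFun
      (m := fun _ : ℕ => (⊤ : MeasurableSpace ((A ≃ Fin K) × (A → Bool)))) X μ)
    (hdist : ∀ (i : ℕ) (z : (A ≃ Fin K) × (A → Bool)),
      μ (X i ⁻¹' {z}) = ENNReal.ofReal (π₀ z.1 *
        ∏ y : A, (if z.2 y then rel y * p (z.1 y) else 1 - rel y * p (z.1 y)))) :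
    TendstoInMeasure μ
      (fun (n : ℕ) ω => ((n : ℝ))⁻¹ * ∑ i ∈ Finset.range n,
        ∑ y : A,
          (((if |(((X i ω).1 y : ℕ) : ℤ) - ((Y y : ℕ) : ℤ)| ≤ (T : ℤ) then (1 : ℝ) else 0) /
              Pwin y) * (p (Y y) / p ((X i ω).1 y))) *
            (if (X i ω).2 y then (1 : ℝ) else 0))
      atTop
      (fun _ => ∑ y : A, rel y * p (Y y)) := by
  classical
  letI mV : MeasurableSpace ((A ≃ Fin K) × (A → Bool)) := ⊤
  haveI : MeasurableSingletonClass ((A ≃ Fin K) × (A → Bool)) :=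
    ⟨fun _ => MeasurableSpace.measurableSet_top⟩
  set g : ((A ≃ Fin K) × (A → Bool)) → ℝ := fun z => ∑ y : A,
      (((if |((z.1 y : ℕ) : ℤ) - ((Y y : ℕ) : ℤ)| ≤ (T : ℤ) then (1 : ℝ) else 0) /
          Pwin y) * (p (Y y) / p (z.1 y))) * (if z.2 y then (1 : ℝ) else 0) with hg
  have hgmeas : Measurable g := measurable_from_top
  set ξ : ℕ → Ω → ℝ := fun i ω => g (X i ω) with hξ
  have hξmeas : ∀ i, Measurable (ξ i) := fun i => hgmeas.comp (hmeas i)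
  -- integrability
  have hint : ∀ i, Integrable (ξ i) μ := by
    intro i
    refine (integrable_const (∑ z : (A ≃ Fin K) × (A → Bool), |g z|)).mono'
      (hξmeas i).aestronglyMeasurable (ae_of_all _ fun ω => ?_)
    have : |g (X i ω)| ≤ ∑ z : (A ≃ Fin K) × (A → Bool), |g z| :=
      Finset.single_le_sum (f := fun z => |g z|) (fun z _ => abs_nonneg _)
        (Finset.mem_univ _)
    simpa [Real.norm_eq_abs] using this
  -- identical distribution
  have hmap : ∀ i, Measure.map (X i) μ = Measure.map (X 0) μ := by
    intro i
    apply MeasureTheory.Measure.ext_of_singleton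
    intro z
    rw [Measure.map_apply (hmeas i) (MeasurableSpace.measurableSet_top),
      Measure.map_apply (hmeas 0) (MeasurableSpace.measurableSet_top),
      hdist i z, hdist 0 z]
  have hident : ∀ i, ProbabilityTheory.IdentDistrib (ξ i) (ξ 0) μ μ := by
    intro i
    exact (ProbabilityTheory.IdentDistrib.mk (hmeas i).aemeasurable
      (hmeas 0).aemeasurable (hmap i)).comp hgmeas
  have hindep' : Pairwise (Function.onFun (ProbabilityTheory.IndepFun · · μ) ξ) :=
    fun i j hij => (hindep.indepFun hij).comp hgmeas hgmeas
  have hslln := ProbabilityTheory.strong_law_ae ξ (hint 0) hindep' hident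
  -- expectation computation
  haveI : IsProbabilityMeasure (Measure.map (X 0) μ) :=
    Measure.isProbabilityMeasure_map (hmeas 0).aemeasurable
  have hBnn : ∀ (z : (A ≃ Fin K) × (A → Bool)), 0 ≤ π₀ z.1 *
      ∏ y : A, (if z.2 y then rel y * p (z.1 y) else 1 - rel y * p (z.1 y)) := by
    intro z
    refine mul_nonneg (hπ₀ _) (Finset.prod_nonneg fun y _ => ?_)
    have h1 : 0 ≤ rel y * p (z.1 y) := mul_nonneg (hrel0 y) (hp0 _).le
    have h2 : rel y * p (z.1 y) ≤ 1 :=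
      mul_le_one₀ (hrel1 y) (hp0 _).le (hp1 _)
    split <;> linarith
  have hEeq : ∫ ω, ξ 0 ω ∂μ = ∑ y : A, rel y * p (Y y) := by
    rw [show (fun ω => ξ 0 ω) = fun ω => g (X 0 ω) from rfl,
      ← MeasureTheory.integral_map (hmeas 0).aemeasurable
        hgmeas.aestronglyMeasurable,
      MeasureTheory.integral_fintype (Integrable.of_finite)]
    have hpt : ∀ z : (A ≃ Fin K) × (A → Bool),
        (Measure.map (X 0) μ {z}).toReal = π₀ z.1 *
          ∏ y : A, (if z.2 y then rel y * p (z.1 y) else 1 - rel y * p (z.1 y)) := by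
      intro z
      rw [Measure.map_apply (hmeas 0) (MeasurableSpace.measurableSet_top), hdist 0 z,
        ENNReal.toReal_ofReal (hBnn z)]
    simp only [smul_eq_mul, measureReal_def, hpt]
    rw [Fintype.sum_prod_type]
    have hinner : ∀ Y₀ : A ≃ Fin K,
        (∑ c : A → Bool, (π₀ Y₀ *
          ∏ y : A, (if c y then rel y * p (Y₀ y) else 1 - rel y * p (Y₀ y))) *
          g (Y₀, c))
        = ∑ y : A, (π₀ Y₀ *
            (if |((Y₀ y : ℕ) : ℤ) - ((Y y : ℕ) : ℤ)| ≤ (T : ℤ) then (1 : ℝ) else 0)) *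
            (rel y * p (Y y) / Pwin y) := by
      intro Y₀
      simp only [hg]
      -- push g's sum out and the Bernoulli product in
      rw [show (∑ c : A → Bool, (π₀ Y₀ *
          ∏ y : A, (if c y then rel y * p (Y₀ y) else 1 - rel y * p (Y₀ y))) *
          ∑ y : A,
            (((if |(((Y₀, c).1 y : ℕ) : ℤ) - ((Y y : ℕ) : ℤ)| ≤ (T : ℤ) then (1 : ℝ) else 0) /
              Pwin y) * (p (Y y) / p ((Y₀, c).1 y))) * (if (Y₀, c).2 y then (1 : ℝ) else 0))
        = ∑ y : A,
            (π₀ Y₀ * (((if |((Y₀ y : ℕ) : ℤ) - ((Y y : ℕ) : ℤ)| ≤ (T : ℤ) then (1 : ℝ) else 0) /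
              Pwin y) * (p (Y y) / p (Y₀ y)))) *
            (∑ c : A → Bool,
              (∏ y' : A, (if c y' then rel y' * p (Y₀ y') else 1 - rel y' * p (Y₀ y'))) *
              (if c y then (1 : ℝ) else 0)) from ?_]
      · simp only [interpol_bern_aux p rel Y₀]
        refine Finset.sum_congr rfl fun y _ => ?_
        have hpne : (p (Y₀ y)) ≠ 0 := (hp0 _).ne'
        have hPw : Pwin y ≠ 0 := (hfull y).ne'
        field_simp
      · simp only [Finset.mul_sum]
        rw [Finset.sum_comm]
        exact Finset.sum_congr rfl fun y _ => Finset.sum_congr rfl fun c _ => by ring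
    simp only [hinner]
    rw [Finset.sum_comm]
    refine Finset.sum_congr rfl fun y _ => ?_
    rw [← Finset.sum_mul, ← hPwin y]
    have hPw : Pwin y ≠ 0 := (hfull y).ne'
    field_simp
  -- conclude
  have key : TendstoInMeasure μ
      (fun (n : ℕ) ω => ((n : ℝ))⁻¹ • ∑ i ∈ Finset.range n, ξ i ω) atTop
      (fun _ => ∫ ω, ξ 0 ω ∂μ) := by
    refine tendstoInMeasure_of_tendsto_ae (fun (n : ℕ) => ?_) hslln
    have hm : Measurable fun ω => ((n : ℝ))⁻¹ • ∑ i ∈ Finset.range n, ξ i ω :=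
      (Finset.measurable_sum (Finset.range n) (fun i _ => hξmeas i)).const_mul _
    exact hm.aestronglyMeasurable
  rw [hEeq] at key
  simpa only [smul_eq_mul] using key
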